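/- For k a power of 2 and any positive integer n, the Kloosterman-type sum S_k(n) := (1/2)·√(k/12) · Σ_{x mod 24k, x² ≡ -24n+1 (mod 24k)} χ₁₂(x)·e(x/(12k)) is nonzero, where χ₁₂ is the Kronecker symbol (12/·) and e(t) = e^{2πit}. -/

import Mathlib

open Complex

/-- The Kronecker symbol `(12/x)`: the real primitive character modulo 12. -/
def chi12 (x : ℕ) : ℤ :=
  if x % 12 = 1 ∨ x % 12 = 11 then 1
  else if x % 12 = 5 ∨ x % 12 = 7 then -1
  else 0

/-- The Kloosterman-type sum `S_k(n)` of the paper: the sum runs over the residues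
`x` modulo `24k` with `x² ≡ -24n+1 (mod 24k)`. -/
noncomputable def kloostermanS (k n : ℕ) : ℂ :=
  (1 / 2 : ℂ) * (Real.sqrt ((k : ℝ) / 12) : ℂ) *
    ∑ x ∈ (Finset.range (24 * k)).filter
        (fun x : ℕ => ((x : ℤ) ^ 2) % (24 * (k : ℤ)) = (-24 * (n : ℤ) + 1) % (24 * (k : ℤ))),
      (chi12 x : ℂ) * Complex.exp (2 * Real.pi * I * ((x : ℂ) / (12 * (k : ℂ))))

noncomputable def om : ℂ := Complex.exp (2 * Real.pi * I / 3)
lemma om_cube : om ^ 3 = 1 := by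
  rw [om, ← Complex.exp_nat_mul]
  rw [show ((3:ℕ):ℂ) * (2 * Real.pi * I / 3) = 2 * Real.pi * I by push_cast; ring]
  exact Complex.exp_two_pi_mul_I
lemma om_ne_one : om ≠ 1 := by
  rw [om, Ne, Complex.exp_eq_one_iff]
  rintro ⟨m, hm⟩
  have h2 : (2 * Real.pi * I : ℂ) ≠ 0 := Complex.two_pi_I_ne_zero
  have h3 : (m : ℂ) * 3 = 1 := by
    field_simp at hm
    linear_combination -hm
  have h4 : ((3 * m : ℤ) : ℂ) = 1 := by push_cast; linear_combination h3
  have : (3 * m : ℤ) = 1 := by exact_mod_cast h4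
  omega
lemma om_sum : om ^ 2 + om + 1 = 0 := by
  have h := om_cube
  have h1 := om_ne_one
  have : (om - 1) * (om ^ 2 + om + 1) = 0 := by linear_combination h
  rcases mul_eq_zero.mp this with h' | h'
  · exact absurd (by linear_combination h' : om = 1) h1
  · exact h'

lemma sqrt_two_adic (m : ℤ) (hm : m % 8 = 1) :
    ∀ t : ℕ, ∃ b : ℤ, b % 2 = 1 ∧ (2 ^ (t+3) : ℤ) ∣ b ^ 2 - m := by
  intro t
  induction t with
  | zero => exact ⟨1, by norm_num, by omega⟩
  | succ t ih =>
    obtain ⟨b, hb, c, hc⟩ := ih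
    obtain ⟨b1, hb1⟩ : ∃ b1, b = 2 * b1 + 1 := ⟨(b-1)/2, by omega⟩
    rcases Int.even_or_odd c with ⟨d, hd⟩ | ⟨d, hd⟩
    · refine ⟨b, hb, d, ?_⟩
      subst hd hb1
      linear_combination hc
    · refine ⟨b + 2 ^ (t+2), by
        have h2 : (2:ℤ) ∣ 2 ^ (t+2) := dvd_pow_self 2 (by omega)
        omega, d + b1 + 1 + 2 ^ t, ?_⟩
      subst hd hb1
      linear_combination hc

lemma coprime_pow_two_odd (k : ℕ) (a : ℤ) (ha : a % 2 = 1) : IsCoprime ((2:ℤ)^k) a := by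
  apply IsCoprime.pow_left
  rw [Int.isCoprime_iff_gcd_eq_one]
  have : Odd a := Int.odd_iff.mpr ha
  exact Nat.coprime_two_left.mpr (Int.natAbs_odd.mpr this)

lemma sq_cong_two_adic (t : ℕ) (x r : ℤ) (hx : x % 2 = 1) (hr : r % 2 = 1)
    (h : (2^(t+3):ℤ) ∣ x^2 - r^2) : (2^(t+2):ℤ) ∣ x - r ∨ (2^(t+2):ℤ) ∣ x + r := by
  obtain ⟨a, ha⟩ : ∃ a, x - r = 2*a := ⟨(x-r)/2, by omega⟩
  obtain ⟨b, hb⟩ : ∃ b, x + r = 2*b := ⟨(x+r)/2, by omega⟩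
  obtain ⟨k, hk⟩ := h
  have h4 : (2:ℤ)^(t+1) ∣ a * b := by
    refine ⟨k, mul_left_cancel₀ (by norm_num : (4:ℤ) ≠ 0) ?_⟩
    linear_combination (-(x+r))*ha - 2*a*hb + hk
  have hpow : (2:ℤ)^(t+2) = 2*2^(t+1) := by ring
  rcases Int.even_or_odd a with ⟨d, hd⟩ | ⟨d, hd⟩
  · -- a even, so b odd
    have hbodd : b % 2 = 1 := by omega
    have hdvd : (2:ℤ)^(t+1) ∣ a :=
      (coprime_pow_two_odd (t+1) b hbodd).dvd_of_dvd_mul_right h4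
    obtain ⟨j, hj⟩ := hdvd
    exact Or.inl ⟨j, by rw [hpow]; linear_combination ha + 2*hj⟩
  · have haodd : a % 2 = 1 := by omega
    have hdvd : (2:ℤ)^(t+1) ∣ b :=
      (coprime_pow_two_odd (t+1) a haodd).dvd_of_dvd_mul_left h4
    obtain ⟨j, hj⟩ := hdvd
    exact Or.inr ⟨j, by rw [hpow]; linear_combination hb + 2*hj⟩

lemma sq_lift (t : ℕ) (x y : ℤ) (hx : x%2=1) (hy : y%2=1) (h : (2^(t+2):ℤ) ∣ x - y) :
    (2^(t+3):ℤ) ∣ x^2 - y^2 := by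
  obtain ⟨j, hj⟩ := h
  obtain ⟨c, hc⟩ : ∃ c, x + y = 2*c := ⟨(x+y)/2, by omega⟩
  exact ⟨j*c, by linear_combination (x+y)*hj + (2^(t+2)*j)*hc⟩

lemma sq_lift' (t : ℕ) (x y : ℤ) (hx : x%2=1) (hy : y%2=1) (h : (2^(t+2):ℤ) ∣ x + y) :
    (2^(t+3):ℤ) ∣ x^2 - y^2 := by
  have := sq_lift t x (-y) hx (by omega) (by simpa using h)
  simpa using this

lemma mod_iff_dvd₁ (Q r x : ℕ) (hrQ : r < Q) : x % Q = r ↔ (Q:ℤ) ∣ (x:ℤ) - r := by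
  constructor
  · intro h
    have h1 : x ≡ r [MOD Q] := by unfold Nat.ModEq; rw [h, Nat.mod_eq_of_lt hrQ]
    exact dvd_sub_comm.mp (Nat.modEq_iff_dvd.mp h1)
  · intro h
    have h1 : x ≡ r [MOD Q] := Nat.modEq_iff_dvd.mpr (dvd_sub_comm.mp h)
    rw [Nat.ModEq, Nat.mod_eq_of_lt hrQ] at h1
    exact h1

lemma mod_iff_dvd₂ (Q r x : ℕ) (h1 : 1 ≤ r) (hrQ : r < Q) :
    x % Q = Q - r ↔ (Q:ℤ) ∣ (x:ℤ) + r := by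
  have hcast : ((Q - r : ℕ) : ℤ) = (Q:ℤ) - r := by
    push_cast [Nat.cast_sub hrQ.le]; ring
  constructor
  · intro h
    have h2 : x ≡ (Q - r) [MOD Q] := by
      unfold Nat.ModEq; rw [h, Nat.mod_eq_of_lt (by omega)]
    obtain ⟨c, hc⟩ := Nat.modEq_iff_dvd.mp h2
    rw [hcast] at hc
    exact ⟨1 - c, by linear_combination -hc⟩
  · rintro ⟨c, hc⟩
    have h2 : x ≡ (Q - r) [MOD Q] := by
      refine Nat.modEq_iff_dvd.mpr ?_
      rw [hcast]
      exact ⟨1 - c, by linear_combination -hc⟩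
    rw [Nat.ModEq, Nat.mod_eq_of_lt (show Q - r < Q by omega)] at h2
    exact h2

lemma char_lemma (s n r x : ℕ) (hr2 : r % 2 = 1) (hrQ : r < 2^(s+2))
    (hrm : ((2:ℤ)^(s+3)) ∣ (r:ℤ)^2 - (-24*(n:ℤ)+1)) :
    (((x:ℤ)^2) % (3*2^(s+3)) = (-24*(n:ℤ)+1) % (3*2^(s+3)))
    ↔ ((x % 2^(s+2) = r ∨ x % 2^(s+2) = 2^(s+2) - r) ∧ x % 3 ≠ 0) := by
  have hr1 : 1 ≤ r := by omega
  have hcastQ : ((2^(s+2):ℕ):ℤ) = (2:ℤ)^(s+2) := by push_cast; ring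
  constructor
  · intro h
    have hdvd : (3*2^(s+3):ℤ) ∣ (x:ℤ)^2 - (-24*(n:ℤ)+1) :=
      Int.ModEq.dvd (show Int.ModEq (3*2^(s+3)) (-24*(n:ℤ)+1) ((x:ℤ)^2) from h.symm)
    have h2 : ((2:ℤ)^(s+3)) ∣ (x:ℤ)^2 - (-24*(n:ℤ)+1) := dvd_trans ⟨3, by ring⟩ hdvd
    have h8 : (8:ℤ) ∣ (x:ℤ)^2 - (-24*(n:ℤ)+1) := dvd_trans ⟨2^s, by ring⟩ h2
    have hx2 : x % 2 = 1 := by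
      rcases Nat.even_or_odd x with ⟨y, hy⟩ | ⟨y, hy⟩
      · exfalso
        obtain ⟨c, hc⟩ := h8
        have hxy : (x:ℤ) = 2*(y:ℤ) := by push_cast [hy]; ring
        have hY : (4:ℤ)*((y:ℤ)^2) + 24*(n:ℤ) - 1 = 8*c := by
          rw [hxy] at hc; linear_combination hc
        generalize (y:ℤ)^2 = Y at hY
        omega
      · omega
    have h3 : x % 3 ≠ 0 := by
      intro h0
      obtain ⟨a, ha⟩ : ∃ a, x = 3*a := ⟨x/3, by omega⟩
      obtain ⟨c, hc⟩ := dvd_trans (⟨2^(s+3), by ring⟩ : (3:ℤ) ∣ 3*2^(s+3)) hdvd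
      have hxa : (x:ℤ) = 3*(a:ℤ) := by push_cast [ha]; ring
      have hA : (9:ℤ)*((a:ℤ)^2) + 24*(n:ℤ) - 1 = 3*c := by
        rw [hxa] at hc; linear_combination hc
      generalize (a:ℤ)^2 = A at hA
      omega
    have h9 : ((2:ℤ)^(s+3)) ∣ (x:ℤ)^2 - (r:ℤ)^2 := by
      obtain ⟨u, hu⟩ := h2; obtain ⟨v, hv⟩ := hrm
      exact ⟨u - v, by linear_combination hu - hv⟩
    have hxodd : (x:ℤ) % 2 = 1 := by omega
    have hrodd : (r:ℤ) % 2 = 1 := by omega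
    rcases sq_cong_two_adic s (x:ℤ) (r:ℤ) hxodd hrodd h9 with hc | hc
    · exact ⟨Or.inl ((mod_iff_dvd₁ (2^(s+2)) r x hrQ).mpr (by rw [hcastQ]; exact hc)), h3⟩
    · exact ⟨Or.inr ((mod_iff_dvd₂ (2^(s+2)) r x hr1 hrQ).mpr (by rw [hcastQ]; exact hc)), h3⟩
  · rintro ⟨hor, h3⟩
    have hQ2 : (2:ℕ) ∣ 2^(s+2) := ⟨2^(s+1), by ring⟩
    have hmm := Nat.mod_mod_of_dvd x hQ2
    have hx2 : x % 2 = 1 := by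
      rcases hor with h | h <;> omega
    have hxodd : (x:ℤ) % 2 = 1 := by omega
    have hrodd : (r:ℤ) % 2 = 1 := by omega
    have h9 : ((2:ℤ)^(s+3)) ∣ (x:ℤ)^2 - (r:ℤ)^2 := by
      rcases hor with h | h
      · exact sq_lift s _ _ hxodd hrodd
          (by rw [← hcastQ]; exact (mod_iff_dvd₁ (2^(s+2)) r x hrQ).mp h)
      · exact sq_lift' s _ _ hxodd hrodd
          (by rw [← hcastQ]; exact (mod_iff_dvd₂ (2^(s+2)) r x hr1 hrQ).mp h)
    have h2 : ((2:ℤ)^(s+3)) ∣ (x:ℤ)^2 - (-24*(n:ℤ)+1) := by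
      obtain ⟨u, hu⟩ := h9; obtain ⟨v, hv⟩ := hrm
      exact ⟨u + v, by linear_combination hu + hv⟩
    have h3' : (3:ℤ) ∣ (x:ℤ)^2 - (-24*(n:ℤ)+1) := by
      rcases (by omega : x % 3 = 1 ∨ x % 3 = 2) with h | h
      · obtain ⟨a, ha⟩ : ∃ a, x = 3*a+1 := ⟨x/3, by omega⟩
        exact ⟨3*(a:ℤ)^2 + 2*a + 8*n, by push_cast [ha]; ring⟩
      · obtain ⟨a, ha⟩ : ∃ a, x = 3*a+2 := ⟨x/3, by omega⟩
        exact ⟨3*(a:ℤ)^2 + 4*a + 1 + 8*n, by push_cast [ha]; ring⟩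
    have hcop : IsCoprime (3:ℤ) ((2:ℤ)^(s+3)) := by
      apply IsCoprime.pow_right
      rw [Int.isCoprime_iff_gcd_eq_one]
      decide
    have hN := hcop.mul_dvd h3' h2
    exact (Int.ModEq.symm (Int.modEq_iff_dvd.mpr hN) : Int.ModEq _ _ _)

open Complex

lemma Qmod12 : ∀ s : ℕ, 2^(s+2) % 12 = 4 ∨ 2^(s+2) % 12 = 8 := by
  intro s
  induction s with
  | zero => left; rfl
  | succ s ih =>
    have h : 2^(s+1+2) = 2*2^(s+2) := by ring
    omega

lemma chi12_three (x : ℕ) (hx : x % 3 = 0) : chi12 x = 0 := by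
  unfold chi12
  have h12 := Nat.mod_mod_of_dvd x (by norm_num : 3 ∣ 12)
  split_ifs with h h' <;> omega

lemma reindex (Q r : ℕ) (hQ0 : 0 < Q) (hrQ : r < Q) (f : ℕ → ℂ) :
    ∑ x ∈ (Finset.range (6*Q)).filter (fun x => x % Q = r), f x
      = ∑ j ∈ Finset.range 6, f (r + Q*j) := by
  refine Finset.sum_nbij' (fun x => x / Q) (fun j => r + Q*j) ?_ ?_ ?_ ?_ ?_
  · intro a ha
    simp only [Finset.mem_filter, Finset.mem_range] at ha ⊢
    exact (Nat.div_lt_iff_lt_mul hQ0).mpr (by linarith [ha.1])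
  · intro j hj
    simp only [Finset.mem_filter, Finset.mem_range] at hj ⊢
    have h5 : Q*j ≤ Q*5 := Nat.mul_le_mul_left Q (by omega)
    refine ⟨by linarith, ?_⟩
    rw [Nat.add_mul_mod_self_left, Nat.mod_eq_of_lt hrQ]
  · intro a ha
    simp only [Finset.mem_filter, Finset.mem_range] at ha
    have h := Nat.div_add_mod a Q
    linarith [ha.2, h]
  · intro j hj
    show (r + Q*j)/Q = j
    rw [Nat.add_mul_div_left _ _ hQ0, Nat.div_eq_of_lt hrQ, zero_add]
  · intro a ha
    simp only [Finset.mem_filter, Finset.mem_range] at ha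
    congr 1
    have h := Nat.div_add_mod a Q
    linarith [ha.2, h]

lemma sum_eq (s n r : ℕ) (hr2 : r % 2 = 1) (hrQ : r < 2^(s+2))
    (hrm : ((2:ℤ)^(s+3)) ∣ (r:ℤ)^2 - (-24*(n:ℤ)+1))
    (f : ℕ → ℂ) (hf0 : ∀ x, x % 3 = 0 → f x = 0) :
    ∑ x ∈ (Finset.range (24 * 2^s)).filter
        (fun x : ℕ => ((x : ℤ) ^ 2) % (24 * ((2^s : ℕ) : ℤ)) = (-24 * (n : ℤ) + 1) % (24 * ((2^s : ℕ) : ℤ))),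
      f x
    = (∑ j ∈ Finset.range 6, f (r + 2^(s+2)*j))
      + (∑ j ∈ Finset.range 6, f (2^(s+2) - r + 2^(s+2)*j)) := by
  have hmod : (24 * ((2^s:ℕ) : ℤ)) = 3*2^(s+3) := by push_cast; ring
  have hN : 24 * 2^s = 6 * 2^(s+2) := by ring
  have hchar : ∀ x ∈ Finset.range (6 * 2^(s+2)),
      (((x : ℤ) ^ 2) % (24 * ((2^s:ℕ) : ℤ)) = (-24 * (n : ℤ) + 1) % (24 * ((2^s:ℕ) : ℤ)))
      ↔ ((x % 2^(s+2) = r ∨ x % 2^(s+2) = 2^(s+2) - r) ∧ x % 3 ≠ 0) := by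
    intro x _
    rw [hmod]
    exact char_lemma s n r x hr2 hrQ hrm
  rw [hN, Finset.filter_congr hchar]
  have h1 : ∑ x ∈ (Finset.range (6*2^(s+2))).filter
        (fun x => (x % 2^(s+2) = r ∨ x % 2^(s+2) = 2^(s+2) - r) ∧ x % 3 ≠ 0), f x
      = ∑ x ∈ (Finset.range (6*2^(s+2))).filter
        (fun x => x % 2^(s+2) = r ∨ x % 2^(s+2) = 2^(s+2) - r), f x := by
    apply Finset.sum_subset
    · intro x hx
      simp only [Finset.mem_filter] at hx ⊢
      exact ⟨hx.1, hx.2.1⟩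
    · intro x hx hnx
      simp only [Finset.mem_filter] at hx hnx
      apply hf0
      by_contra h3
      exact hnx ⟨hx.1, hx.2, h3⟩
  rw [h1, Finset.filter_or, Finset.sum_union ?disj]
  case disj =>
    rw [Finset.disjoint_filter]
    intro x _ hp hq
    have hQ2 : 2^(s+2) % 2 = 0 := by
      have : 2^(s+2) = 2*2^(s+1) := by ring
      omega
    omega
  rw [reindex _ r (by positivity) hrQ f, reindex _ (2^(s+2) - r) (by positivity) (by omega) f]

lemma exp_term (Q x j : ℕ) (hQC : (Q:ℂ) ≠ 0) :
    Complex.exp (2*Real.pi*I*(((x + Q*j : ℕ):ℂ)/(3*(Q:ℂ))))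
    = Complex.exp (2*Real.pi*I*((x:ℂ)/(3*(Q:ℂ)))) * om^j := by
  rw [om, ← Complex.exp_nat_mul, ← Complex.exp_add]
  congr 1
  push_cast
  field_simp

lemma key_ne (Q r : ℕ) (hr2 : r % 2 = 1) (hQ4 : Q % 4 = 0) (hQ0 : 0 < Q) (c : ℕ) :
    (Complex.exp (2*Real.pi*I*((r:ℂ)/(3*(Q:ℂ)))))^2 ≠ om^c := by
  intro h
  rw [om, ← Complex.exp_nat_mul, ← Complex.exp_nat_mul] at h
  obtain ⟨m, hm⟩ := Complex.exp_eq_exp_iff_exists_int.mp h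
  have hQC : (Q:ℂ) ≠ 0 := Nat.cast_ne_zero.mpr (by omega)
  have h2 : (2*Real.pi*I : ℂ) ≠ 0 := Complex.two_pi_I_ne_zero
  field_simp at hm
  have heq : (2*Real.pi*I : ℂ) * ((6:ℂ)*(r:ℂ)) =
      (2*Real.pi*I : ℂ) * (3*((Q:ℂ)*(c:ℂ)) + 9*((Q:ℂ)*(m:ℂ))) := by
    have hm' : (2:ℂ)*r = Q*(c+3*m) := by exact_mod_cast hm
    linear_combination (2*Real.pi*I*3 : ℂ) * hm'
  have heq2 : ((6*(r:ℤ) : ℤ) : ℂ) = ((3*((Q:ℤ)*(c:ℤ)) + 9*((Q:ℤ)*m) : ℤ) : ℂ) := by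
    push_cast
    exact mul_left_cancel₀ h2 heq
  have heq3 : (6*(r:ℤ) : ℤ) = 3*((Q:ℤ)*(c:ℤ)) + 9*((Q:ℤ)*m) := by exact_mod_cast heq2
  have h4Q : (4:ℤ) ∣ (Q:ℤ) := by omega
  have h4u : (4:ℤ) ∣ (Q:ℤ)*(c:ℤ) := Dvd.dvd.mul_right h4Q _
  have h4v : (4:ℤ) ∣ (Q:ℤ)*m := Dvd.dvd.mul_right h4Q _
  obtain ⟨u, hu⟩ := h4u
  obtain ⟨v, hv⟩ := h4v
  omega

lemma case_core (A B : ℂ) (c : ℕ) (E E' : ℂ)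
    (hne : A ≠ 0) (hratio : B*om = -(om^c) * A)
    (hEE : E*E' = om) (hE2 : E^2 ≠ om^c)
    (h : A*E + B*E' = 0) : False := by
  have h2 : A * (E^2 - om^c) = 0 := by
    linear_combination E*h - B*hEE - hratio
  rcases mul_eq_zero.mp h2 with h' | h'
  · exact hne h'
  · exact hE2 (by linear_combination h')

lemma final_ne (Q r : ℕ) (hQ0 : 0 < Q) (hQ4 : Q % 4 = 0)
    (hq12 : Q % 12 = 4 ∨ Q % 12 = 8) (hr2 : r % 2 = 1) (hrQ : r < Q) :
    (∑ j ∈ Finset.range 6, (chi12 (r + Q*j) : ℂ) *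
        Complex.exp (2*Real.pi*I*(((r + Q*j : ℕ):ℂ)/(3*(Q:ℂ)))))
    + (∑ j ∈ Finset.range 6, (chi12 (Q - r + Q*j) : ℂ) *
        Complex.exp (2*Real.pi*I*(((Q - r + Q*j : ℕ):ℂ)/(3*(Q:ℂ))))) ≠ 0 := by
  have hQC : (Q:ℂ) ≠ 0 := Nat.cast_ne_zero.mpr (by omega)
  have hsplit : ∀ x : ℕ, (∑ j ∈ Finset.range 6, (chi12 (x + Q*j) : ℂ) *
      Complex.exp (2*Real.pi*I*(((x + Q*j : ℕ):ℂ)/(3*(Q:ℂ)))))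
      = (∑ j ∈ Finset.range 6, (chi12 (x + Q*j) : ℂ) * om^j) *
        Complex.exp (2*Real.pi*I*((x:ℂ)/(3*(Q:ℂ)))) := by
    intro x
    rw [Finset.sum_mul]
    refine Finset.sum_congr rfl (fun j _ => ?_)
    rw [exp_term Q x j hQC]
    ring
  intro h0
  rw [hsplit r, hsplit (Q - r)] at h0
  have hEE : Complex.exp (2*Real.pi*I*((r:ℂ)/(3*(Q:ℂ))))
      * Complex.exp (2*Real.pi*I*(((Q - r:ℕ):ℂ)/(3*(Q:ℂ)))) = om := by
    rw [← Complex.exp_add, om]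
    congr 1
    rw [Nat.cast_sub hrQ.le]
    field_simp
    ring
  rcases hq12 with hq | hq
  all_goals rcases (show r % 12 = 1 ∨ r % 12 = 3 ∨ r % 12 = 5 ∨ r % 12 = 7 ∨ r % 12 = 9 ∨ r % 12 = 11 by
    omega) with hr12 | hr12 | hr12 | hr12 | hr12 | hr12
  · have e0 : chi12 (r + Q*0) = 1 := by
      unfold chi12; rw [show (r + Q*0) % 12 = 1 by omega]; norm_num
    have e1 : chi12 (r + Q*1) = -1 := by
      unfold chi12; rw [show (r + Q*1) % 12 = 5 by omega]; norm_num
    have e2 : chi12 (r + Q*2) = 0 := by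
      unfold chi12; rw [show (r + Q*2) % 12 = 9 by omega]; norm_num
    have e3 : chi12 (r + Q*3) = 1 := by
      unfold chi12; rw [show (r + Q*3) % 12 = 1 by omega]; norm_num
    have e4 : chi12 (r + Q*4) = -1 := by
      unfold chi12; rw [show (r + Q*4) % 12 = 5 by omega]; norm_num
    have e5 : chi12 (r + Q*5) = 0 := by
      unfold chi12; rw [show (r + Q*5) % 12 = 9 by omega]; norm_num
    have g0 : chi12 (Q - r + Q*0) = 0 := by
      unfold chi12; rw [show (Q - r + Q*0) % 12 = 3 by omega]; norm_num
    have g1 : chi12 (Q - r + Q*1) = -1 := by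
      unfold chi12; rw [show (Q - r + Q*1) % 12 = 7 by omega]; norm_num
    have g2 : chi12 (Q - r + Q*2) = 1 := by
      unfold chi12; rw [show (Q - r + Q*2) % 12 = 11 by omega]; norm_num
    have g3 : chi12 (Q - r + Q*3) = 0 := by
      unfold chi12; rw [show (Q - r + Q*3) % 12 = 3 by omega]; norm_num
    have g4 : chi12 (Q - r + Q*4) = -1 := by
      unfold chi12; rw [show (Q - r + Q*4) % 12 = 7 by omega]; norm_num
    have g5 : chi12 (Q - r + Q*5) = 1 := by
      unfold chi12; rw [show (Q - r + Q*5) % 12 = 11 by omega]; norm_num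
    have hc1 : (∑ j ∈ Finset.range 6, (chi12 (r + Q*j) : ℂ) * om^j) = (2:ℂ) + (-2:ℂ)*om := by
      simp only [Finset.sum_range_succ, Finset.sum_range_zero, e0, e1, e2, e3, e4, e5]
      push_cast
      linear_combination ((1:ℂ) + (-1:ℂ)*om)*om_cube + ((0:ℂ))*om_sum
    have hc2 : (∑ j ∈ Finset.range 6, (chi12 (Q - r + Q*j) : ℂ) * om^j) = (-2:ℂ) + (-4:ℂ)*om := by
      simp only [Finset.sum_range_succ, Finset.sum_range_zero, g0, g1, g2, g3, g4, g5]
      push_cast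
      linear_combination ((-1:ℂ)*om + (1:ℂ)*om^2)*om_cube + ((2:ℂ))*om_sum
    have hne : ((2:ℂ) + (-2:ℂ)*om) ≠ 0 := by
      intro hz
      exact om_ne_one (by linear_combination ((1:ℂ)/(-2))*hz)
    have hratio : ((-2:ℂ) + (-4:ℂ)*om)*om = -(om^2) * ((2:ℂ) + (-2:ℂ)*om) := by
      linear_combination ((-2:ℂ))*om_cube + ((-2:ℂ))*om_sum
    rw [hc1, hc2] at h0
    exact case_core _ _ 2 _ _ hne hratio hEE (key_ne Q r hr2 hQ4 hQ0 2) h0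
  · have e0 : chi12 (r + Q*0) = 0 := by
      unfold chi12; rw [show (r + Q*0) % 12 = 3 by omega]; norm_num
    have e1 : chi12 (r + Q*1) = -1 := by
      unfold chi12; rw [show (r + Q*1) % 12 = 7 by omega]; norm_num
    have e2 : chi12 (r + Q*2) = 1 := by
      unfold chi12; rw [show (r + Q*2) % 12 = 11 by omega]; norm_num
    have e3 : chi12 (r + Q*3) = 0 := by
      unfold chi12; rw [show (r + Q*3) % 12 = 3 by omega]; norm_num
    have e4 : chi12 (r + Q*4) = -1 := by
      unfold chi12; rw [show (r + Q*4) % 12 = 7 by omega]; norm_num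
    have e5 : chi12 (r + Q*5) = 1 := by
      unfold chi12; rw [show (r + Q*5) % 12 = 11 by omega]; norm_num
    have g0 : chi12 (Q - r + Q*0) = 1 := by
      unfold chi12; rw [show (Q - r + Q*0) % 12 = 1 by omega]; norm_num
    have g1 : chi12 (Q - r + Q*1) = -1 := by
      unfold chi12; rw [show (Q - r + Q*1) % 12 = 5 by omega]; norm_num
    have g2 : chi12 (Q - r + Q*2) = 0 := by
      unfold chi12; rw [show (Q - r + Q*2) % 12 = 9 by omega]; norm_num
    have g3 : chi12 (Q - r + Q*3) = 1 := by
      unfold chi12; rw [show (Q - r + Q*3) % 12 = 1 by omega]; norm_num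
    have g4 : chi12 (Q - r + Q*4) = -1 := by
      unfold chi12; rw [show (Q - r + Q*4) % 12 = 5 by omega]; norm_num
    have g5 : chi12 (Q - r + Q*5) = 0 := by
      unfold chi12; rw [show (Q - r + Q*5) % 12 = 9 by omega]; norm_num
    have hc1 : (∑ j ∈ Finset.range 6, (chi12 (r + Q*j) : ℂ) * om^j) = (-2:ℂ) + (-4:ℂ)*om := by
      simp only [Finset.sum_range_succ, Finset.sum_range_zero, e0, e1, e2, e3, e4, e5]
      push_cast
      linear_combination ((-1:ℂ)*om + (1:ℂ)*om^2)*om_cube + ((2:ℂ))*om_sum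
    have hc2 : (∑ j ∈ Finset.range 6, (chi12 (Q - r + Q*j) : ℂ) * om^j) = (2:ℂ) + (-2:ℂ)*om := by
      simp only [Finset.sum_range_succ, Finset.sum_range_zero, g0, g1, g2, g3, g4, g5]
      push_cast
      linear_combination ((1:ℂ) + (-1:ℂ)*om)*om_cube + ((0:ℂ))*om_sum
    have hne : ((-2:ℂ) + (-4:ℂ)*om) ≠ 0 := by
      intro hz
      have hcb : (-72:ℂ) = 0 := by
        linear_combination ((4:ℂ) + (-8:ℂ)*om + (16:ℂ)*om^2)*hz + (64:ℂ)*om_cube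
      norm_num at hcb
    have hratio : ((2:ℂ) + (-2:ℂ)*om)*om = -(om^0) * ((-2:ℂ) + (-4:ℂ)*om) := by
      linear_combination ((0:ℂ))*om_cube + ((-2:ℂ))*om_sum
    rw [hc1, hc2] at h0
    exact case_core _ _ 0 _ _ hne hratio hEE (key_ne Q r hr2 hQ4 hQ0 0) h0
  · have e0 : chi12 (r + Q*0) = -1 := by
      unfold chi12; rw [show (r + Q*0) % 12 = 5 by omega]; norm_num
    have e1 : chi12 (r + Q*1) = 0 := by
      unfold chi12; rw [show (r + Q*1) % 12 = 9 by omega]; norm_num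
    have e2 : chi12 (r + Q*2) = 1 := by
      unfold chi12; rw [show (r + Q*2) % 12 = 1 by omega]; norm_num
    have e3 : chi12 (r + Q*3) = -1 := by
      unfold chi12; rw [show (r + Q*3) % 12 = 5 by omega]; norm_num
    have e4 : chi12 (r + Q*4) = 0 := by
      unfold chi12; rw [show (r + Q*4) % 12 = 9 by omega]; norm_num
    have e5 : chi12 (r + Q*5) = 1 := by
      unfold chi12; rw [show (r + Q*5) % 12 = 1 by omega]; norm_num
    have g0 : chi12 (Q - r + Q*0) = 1 := by
      unfold chi12; rw [show (Q - r + Q*0) % 12 = 11 by omega]; norm_num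
    have g1 : chi12 (Q - r + Q*1) = 0 := by
      unfold chi12; rw [show (Q - r + Q*1) % 12 = 3 by omega]; norm_num
    have g2 : chi12 (Q - r + Q*2) = -1 := by
      unfold chi12; rw [show (Q - r + Q*2) % 12 = 7 by omega]; norm_num
    have g3 : chi12 (Q - r + Q*3) = 1 := by
      unfold chi12; rw [show (Q - r + Q*3) % 12 = 11 by omega]; norm_num
    have g4 : chi12 (Q - r + Q*4) = 0 := by
      unfold chi12; rw [show (Q - r + Q*4) % 12 = 3 by omega]; norm_num
    have g5 : chi12 (Q - r + Q*5) = -1 := by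
      unfold chi12; rw [show (Q - r + Q*5) % 12 = 7 by omega]; norm_num
    have hc1 : (∑ j ∈ Finset.range 6, (chi12 (r + Q*j) : ℂ) * om^j) = (-4:ℂ) + (-2:ℂ)*om := by
      simp only [Finset.sum_range_succ, Finset.sum_range_zero, e0, e1, e2, e3, e4, e5]
      push_cast
      linear_combination ((-1:ℂ) + (1:ℂ)*om^2)*om_cube + ((2:ℂ))*om_sum
    have hc2 : (∑ j ∈ Finset.range 6, (chi12 (Q - r + Q*j) : ℂ) * om^j) = (4:ℂ) + (2:ℂ)*om := by
      simp only [Finset.sum_range_succ, Finset.sum_range_zero, g0, g1, g2, g3, g4, g5]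
      push_cast
      linear_combination ((1:ℂ) + (-1:ℂ)*om^2)*om_cube + ((-2:ℂ))*om_sum
    have hne : ((-4:ℂ) + (-2:ℂ)*om) ≠ 0 := by
      intro hz
      have hcb : (-72:ℂ) = 0 := by
        linear_combination ((16:ℂ) + (-8:ℂ)*om + (4:ℂ)*om^2)*hz + (8:ℂ)*om_cube
      norm_num at hcb
    have hratio : ((4:ℂ) + (2:ℂ)*om)*om = -(om^1) * ((-4:ℂ) + (-2:ℂ)*om) := by
      linear_combination ((0:ℂ))*om_cube + ((0:ℂ))*om_sum
    rw [hc1, hc2] at h0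
    exact case_core _ _ 1 _ _ hne hratio hEE (key_ne Q r hr2 hQ4 hQ0 1) h0
  · have e0 : chi12 (r + Q*0) = -1 := by
      unfold chi12; rw [show (r + Q*0) % 12 = 7 by omega]; norm_num
    have e1 : chi12 (r + Q*1) = 1 := by
      unfold chi12; rw [show (r + Q*1) % 12 = 11 by omega]; norm_num
    have e2 : chi12 (r + Q*2) = 0 := by
      unfold chi12; rw [show (r + Q*2) % 12 = 3 by omega]; norm_num
    have e3 : chi12 (r + Q*3) = -1 := by
      unfold chi12; rw [show (r + Q*3) % 12 = 7 by omega]; norm_num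
    have e4 : chi12 (r + Q*4) = 1 := by
      unfold chi12; rw [show (r + Q*4) % 12 = 11 by omega]; norm_num
    have e5 : chi12 (r + Q*5) = 0 := by
      unfold chi12; rw [show (r + Q*5) % 12 = 3 by omega]; norm_num
    have g0 : chi12 (Q - r + Q*0) = 0 := by
      unfold chi12; rw [show (Q - r + Q*0) % 12 = 9 by omega]; norm_num
    have g1 : chi12 (Q - r + Q*1) = 1 := by
      unfold chi12; rw [show (Q - r + Q*1) % 12 = 1 by omega]; norm_num
    have g2 : chi12 (Q - r + Q*2) = -1 := by
      unfold chi12; rw [show (Q - r + Q*2) % 12 = 5 by omega]; norm_num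
    have g3 : chi12 (Q - r + Q*3) = 0 := by
      unfold chi12; rw [show (Q - r + Q*3) % 12 = 9 by omega]; norm_num
    have g4 : chi12 (Q - r + Q*4) = 1 := by
      unfold chi12; rw [show (Q - r + Q*4) % 12 = 1 by omega]; norm_num
    have g5 : chi12 (Q - r + Q*5) = -1 := by
      unfold chi12; rw [show (Q - r + Q*5) % 12 = 5 by omega]; norm_num
    have hc1 : (∑ j ∈ Finset.range 6, (chi12 (r + Q*j) : ℂ) * om^j) = (-2:ℂ) + (2:ℂ)*om := by
      simp only [Finset.sum_range_succ, Finset.sum_range_zero, e0, e1, e2, e3, e4, e5]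
      push_cast
      linear_combination ((-1:ℂ) + (1:ℂ)*om)*om_cube + ((0:ℂ))*om_sum
    have hc2 : (∑ j ∈ Finset.range 6, (chi12 (Q - r + Q*j) : ℂ) * om^j) = (2:ℂ) + (4:ℂ)*om := by
      simp only [Finset.sum_range_succ, Finset.sum_range_zero, g0, g1, g2, g3, g4, g5]
      push_cast
      linear_combination ((1:ℂ)*om + (-1:ℂ)*om^2)*om_cube + ((-2:ℂ))*om_sum
    have hne : ((-2:ℂ) + (2:ℂ)*om) ≠ 0 := by
      intro hz
      exact om_ne_one (by linear_combination ((1:ℂ)/2)*hz)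
    have hratio : ((2:ℂ) + (4:ℂ)*om)*om = -(om^2) * ((-2:ℂ) + (2:ℂ)*om) := by
      linear_combination ((2:ℂ))*om_cube + ((2:ℂ))*om_sum
    rw [hc1, hc2] at h0
    exact case_core _ _ 2 _ _ hne hratio hEE (key_ne Q r hr2 hQ4 hQ0 2) h0
  · have e0 : chi12 (r + Q*0) = 0 := by
      unfold chi12; rw [show (r + Q*0) % 12 = 9 by omega]; norm_num
    have e1 : chi12 (r + Q*1) = 1 := by
      unfold chi12; rw [show (r + Q*1) % 12 = 1 by omega]; norm_num
    have e2 : chi12 (r + Q*2) = -1 := by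
      unfold chi12; rw [show (r + Q*2) % 12 = 5 by omega]; norm_num
    have e3 : chi12 (r + Q*3) = 0 := by
      unfold chi12; rw [show (r + Q*3) % 12 = 9 by omega]; norm_num
    have e4 : chi12 (r + Q*4) = 1 := by
      unfold chi12; rw [show (r + Q*4) % 12 = 1 by omega]; norm_num
    have e5 : chi12 (r + Q*5) = -1 := by
      unfold chi12; rw [show (r + Q*5) % 12 = 5 by omega]; norm_num
    have g0 : chi12 (Q - r + Q*0) = -1 := by
      unfold chi12; rw [show (Q - r + Q*0) % 12 = 7 by omega]; norm_num
    have g1 : chi12 (Q - r + Q*1) = 1 := by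
      unfold chi12; rw [show (Q - r + Q*1) % 12 = 11 by omega]; norm_num
    have g2 : chi12 (Q - r + Q*2) = 0 := by
      unfold chi12; rw [show (Q - r + Q*2) % 12 = 3 by omega]; norm_num
    have g3 : chi12 (Q - r + Q*3) = -1 := by
      unfold chi12; rw [show (Q - r + Q*3) % 12 = 7 by omega]; norm_num
    have g4 : chi12 (Q - r + Q*4) = 1 := by
      unfold chi12; rw [show (Q - r + Q*4) % 12 = 11 by omega]; norm_num
    have g5 : chi12 (Q - r + Q*5) = 0 := by
      unfold chi12; rw [show (Q - r + Q*5) % 12 = 3 by omega]; norm_num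
    have hc1 : (∑ j ∈ Finset.range 6, (chi12 (r + Q*j) : ℂ) * om^j) = (2:ℂ) + (4:ℂ)*om := by
      simp only [Finset.sum_range_succ, Finset.sum_range_zero, e0, e1, e2, e3, e4, e5]
      push_cast
      linear_combination ((1:ℂ)*om + (-1:ℂ)*om^2)*om_cube + ((-2:ℂ))*om_sum
    have hc2 : (∑ j ∈ Finset.range 6, (chi12 (Q - r + Q*j) : ℂ) * om^j) = (-2:ℂ) + (2:ℂ)*om := by
      simp only [Finset.sum_range_succ, Finset.sum_range_zero, g0, g1, g2, g3, g4, g5]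
      push_cast
      linear_combination ((-1:ℂ) + (1:ℂ)*om)*om_cube + ((0:ℂ))*om_sum
    have hne : ((2:ℂ) + (4:ℂ)*om) ≠ 0 := by
      intro hz
      have hcb : (72:ℂ) = 0 := by
        linear_combination ((4:ℂ) + (-8:ℂ)*om + (16:ℂ)*om^2)*hz + (-64:ℂ)*om_cube
      norm_num at hcb
    have hratio : ((-2:ℂ) + (2:ℂ)*om)*om = -(om^0) * ((2:ℂ) + (4:ℂ)*om) := by
      linear_combination ((0:ℂ))*om_cube + ((2:ℂ))*om_sum
    rw [hc1, hc2] at h0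
    exact case_core _ _ 0 _ _ hne hratio hEE (key_ne Q r hr2 hQ4 hQ0 0) h0
  · have e0 : chi12 (r + Q*0) = 1 := by
      unfold chi12; rw [show (r + Q*0) % 12 = 11 by omega]; norm_num
    have e1 : chi12 (r + Q*1) = 0 := by
      unfold chi12; rw [show (r + Q*1) % 12 = 3 by omega]; norm_num
    have e2 : chi12 (r + Q*2) = -1 := by
      unfold chi12; rw [show (r + Q*2) % 12 = 7 by omega]; norm_num
    have e3 : chi12 (r + Q*3) = 1 := by
      unfold chi12; rw [show (r + Q*3) % 12 = 11 by omega]; norm_num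
    have e4 : chi12 (r + Q*4) = 0 := by
      unfold chi12; rw [show (r + Q*4) % 12 = 3 by omega]; norm_num
    have e5 : chi12 (r + Q*5) = -1 := by
      unfold chi12; rw [show (r + Q*5) % 12 = 7 by omega]; norm_num
    have g0 : chi12 (Q - r + Q*0) = -1 := by
      unfold chi12; rw [show (Q - r + Q*0) % 12 = 5 by omega]; norm_num
    have g1 : chi12 (Q - r + Q*1) = 0 := by
      unfold chi12; rw [show (Q - r + Q*1) % 12 = 9 by omega]; norm_num
    have g2 : chi12 (Q - r + Q*2) = 1 := by
      unfold chi12; rw [show (Q - r + Q*2) % 12 = 1 by omega]; norm_num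
    have g3 : chi12 (Q - r + Q*3) = -1 := by
      unfold chi12; rw [show (Q - r + Q*3) % 12 = 5 by omega]; norm_num
    have g4 : chi12 (Q - r + Q*4) = 0 := by
      unfold chi12; rw [show (Q - r + Q*4) % 12 = 9 by omega]; norm_num
    have g5 : chi12 (Q - r + Q*5) = 1 := by
      unfold chi12; rw [show (Q - r + Q*5) % 12 = 1 by omega]; norm_num
    have hc1 : (∑ j ∈ Finset.range 6, (chi12 (r + Q*j) : ℂ) * om^j) = (4:ℂ) + (2:ℂ)*om := by
      simp only [Finset.sum_range_succ, Finset.sum_range_zero, e0, e1, e2, e3, e4, e5]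
      push_cast
      linear_combination ((1:ℂ) + (-1:ℂ)*om^2)*om_cube + ((-2:ℂ))*om_sum
    have hc2 : (∑ j ∈ Finset.range 6, (chi12 (Q - r + Q*j) : ℂ) * om^j) = (-4:ℂ) + (-2:ℂ)*om := by
      simp only [Finset.sum_range_succ, Finset.sum_range_zero, g0, g1, g2, g3, g4, g5]
      push_cast
      linear_combination ((-1:ℂ) + (1:ℂ)*om^2)*om_cube + ((2:ℂ))*om_sum
    have hne : ((4:ℂ) + (2:ℂ)*om) ≠ 0 := by
      intro hz
      have hcb : (72:ℂ) = 0 := by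
        linear_combination ((16:ℂ) + (-8:ℂ)*om + (4:ℂ)*om^2)*hz + (-8:ℂ)*om_cube
      norm_num at hcb
    have hratio : ((-4:ℂ) + (-2:ℂ)*om)*om = -(om^1) * ((4:ℂ) + (2:ℂ)*om) := by
      linear_combination ((0:ℂ))*om_cube + ((0:ℂ))*om_sum
    rw [hc1, hc2] at h0
    exact case_core _ _ 1 _ _ hne hratio hEE (key_ne Q r hr2 hQ4 hQ0 1) h0
  · have e0 : chi12 (r + Q*0) = 1 := by
      unfold chi12; rw [show (r + Q*0) % 12 = 1 by omega]; norm_num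
    have e1 : chi12 (r + Q*1) = 0 := by
      unfold chi12; rw [show (r + Q*1) % 12 = 9 by omega]; norm_num
    have e2 : chi12 (r + Q*2) = -1 := by
      unfold chi12; rw [show (r + Q*2) % 12 = 5 by omega]; norm_num
    have e3 : chi12 (r + Q*3) = 1 := by
      unfold chi12; rw [show (r + Q*3) % 12 = 1 by omega]; norm_num
    have e4 : chi12 (r + Q*4) = 0 := by
      unfold chi12; rw [show (r + Q*4) % 12 = 9 by omega]; norm_num
    have e5 : chi12 (r + Q*5) = -1 := by
      unfold chi12; rw [show (r + Q*5) % 12 = 5 by omega]; norm_num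
    have g0 : chi12 (Q - r + Q*0) = -1 := by
      unfold chi12; rw [show (Q - r + Q*0) % 12 = 7 by omega]; norm_num
    have g1 : chi12 (Q - r + Q*1) = 0 := by
      unfold chi12; rw [show (Q - r + Q*1) % 12 = 3 by omega]; norm_num
    have g2 : chi12 (Q - r + Q*2) = 1 := by
      unfold chi12; rw [show (Q - r + Q*2) % 12 = 11 by omega]; norm_num
    have g3 : chi12 (Q - r + Q*3) = -1 := by
      unfold chi12; rw [show (Q - r + Q*3) % 12 = 7 by omega]; norm_num
    have g4 : chi12 (Q - r + Q*4) = 0 := by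
      unfold chi12; rw [show (Q - r + Q*4) % 12 = 3 by omega]; norm_num
    have g5 : chi12 (Q - r + Q*5) = 1 := by
      unfold chi12; rw [show (Q - r + Q*5) % 12 = 11 by omega]; norm_num
    have hc1 : (∑ j ∈ Finset.range 6, (chi12 (r + Q*j) : ℂ) * om^j) = (4:ℂ) + (2:ℂ)*om := by
      simp only [Finset.sum_range_succ, Finset.sum_range_zero, e0, e1, e2, e3, e4, e5]
      push_cast
      linear_combination ((1:ℂ) + (-1:ℂ)*om^2)*om_cube + ((-2:ℂ))*om_sum
    have hc2 : (∑ j ∈ Finset.range 6, (chi12 (Q - r + Q*j) : ℂ) * om^j) = (-4:ℂ) + (-2:ℂ)*om := by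
      simp only [Finset.sum_range_succ, Finset.sum_range_zero, g0, g1, g2, g3, g4, g5]
      push_cast
      linear_combination ((-1:ℂ) + (1:ℂ)*om^2)*om_cube + ((2:ℂ))*om_sum
    have hne : ((4:ℂ) + (2:ℂ)*om) ≠ 0 := by
      intro hz
      have hcb : (72:ℂ) = 0 := by
        linear_combination ((16:ℂ) + (-8:ℂ)*om + (4:ℂ)*om^2)*hz + (-8:ℂ)*om_cube
      norm_num at hcb
    have hratio : ((-4:ℂ) + (-2:ℂ)*om)*om = -(om^1) * ((4:ℂ) + (2:ℂ)*om) := by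
      linear_combination ((0:ℂ))*om_cube + ((0:ℂ))*om_sum
    rw [hc1, hc2] at h0
    exact case_core _ _ 1 _ _ hne hratio hEE (key_ne Q r hr2 hQ4 hQ0 1) h0
  · have e0 : chi12 (r + Q*0) = 0 := by
      unfold chi12; rw [show (r + Q*0) % 12 = 3 by omega]; norm_num
    have e1 : chi12 (r + Q*1) = 1 := by
      unfold chi12; rw [show (r + Q*1) % 12 = 11 by omega]; norm_num
    have e2 : chi12 (r + Q*2) = -1 := by
      unfold chi12; rw [show (r + Q*2) % 12 = 7 by omega]; norm_num
    have e3 : chi12 (r + Q*3) = 0 := by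
      unfold chi12; rw [show (r + Q*3) % 12 = 3 by omega]; norm_num
    have e4 : chi12 (r + Q*4) = 1 := by
      unfold chi12; rw [show (r + Q*4) % 12 = 11 by omega]; norm_num
    have e5 : chi12 (r + Q*5) = -1 := by
      unfold chi12; rw [show (r + Q*5) % 12 = 7 by omega]; norm_num
    have g0 : chi12 (Q - r + Q*0) = -1 := by
      unfold chi12; rw [show (Q - r + Q*0) % 12 = 5 by omega]; norm_num
    have g1 : chi12 (Q - r + Q*1) = 1 := by
      unfold chi12; rw [show (Q - r + Q*1) % 12 = 1 by omega]; norm_num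
    have g2 : chi12 (Q - r + Q*2) = 0 := by
      unfold chi12; rw [show (Q - r + Q*2) % 12 = 9 by omega]; norm_num
    have g3 : chi12 (Q - r + Q*3) = -1 := by
      unfold chi12; rw [show (Q - r + Q*3) % 12 = 5 by omega]; norm_num
    have g4 : chi12 (Q - r + Q*4) = 1 := by
      unfold chi12; rw [show (Q - r + Q*4) % 12 = 1 by omega]; norm_num
    have g5 : chi12 (Q - r + Q*5) = 0 := by
      unfold chi12; rw [show (Q - r + Q*5) % 12 = 9 by omega]; norm_num
    have hc1 : (∑ j ∈ Finset.range 6, (chi12 (r + Q*j) : ℂ) * om^j) = (2:ℂ) + (4:ℂ)*om := by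
      simp only [Finset.sum_range_succ, Finset.sum_range_zero, e0, e1, e2, e3, e4, e5]
      push_cast
      linear_combination ((1:ℂ)*om + (-1:ℂ)*om^2)*om_cube + ((-2:ℂ))*om_sum
    have hc2 : (∑ j ∈ Finset.range 6, (chi12 (Q - r + Q*j) : ℂ) * om^j) = (-2:ℂ) + (2:ℂ)*om := by
      simp only [Finset.sum_range_succ, Finset.sum_range_zero, g0, g1, g2, g3, g4, g5]
      push_cast
      linear_combination ((-1:ℂ) + (1:ℂ)*om)*om_cube + ((0:ℂ))*om_sum
    have hne : ((2:ℂ) + (4:ℂ)*om) ≠ 0 := by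
      intro hz
      have hcb : (72:ℂ) = 0 := by
        linear_combination ((4:ℂ) + (-8:ℂ)*om + (16:ℂ)*om^2)*hz + (-64:ℂ)*om_cube
      norm_num at hcb
    have hratio : ((-2:ℂ) + (2:ℂ)*om)*om = -(om^0) * ((2:ℂ) + (4:ℂ)*om) := by
      linear_combination ((0:ℂ))*om_cube + ((2:ℂ))*om_sum
    rw [hc1, hc2] at h0
    exact case_core _ _ 0 _ _ hne hratio hEE (key_ne Q r hr2 hQ4 hQ0 0) h0
  · have e0 : chi12 (r + Q*0) = -1 := by
      unfold chi12; rw [show (r + Q*0) % 12 = 5 by omega]; norm_num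
    have e1 : chi12 (r + Q*1) = 1 := by
      unfold chi12; rw [show (r + Q*1) % 12 = 1 by omega]; norm_num
    have e2 : chi12 (r + Q*2) = 0 := by
      unfold chi12; rw [show (r + Q*2) % 12 = 9 by omega]; norm_num
    have e3 : chi12 (r + Q*3) = -1 := by
      unfold chi12; rw [show (r + Q*3) % 12 = 5 by omega]; norm_num
    have e4 : chi12 (r + Q*4) = 1 := by
      unfold chi12; rw [show (r + Q*4) % 12 = 1 by omega]; norm_num
    have e5 : chi12 (r + Q*5) = 0 := by
      unfold chi12; rw [show (r + Q*5) % 12 = 9 by omega]; norm_num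
    have g0 : chi12 (Q - r + Q*0) = 0 := by
      unfold chi12; rw [show (Q - r + Q*0) % 12 = 3 by omega]; norm_num
    have g1 : chi12 (Q - r + Q*1) = 1 := by
      unfold chi12; rw [show (Q - r + Q*1) % 12 = 11 by omega]; norm_num
    have g2 : chi12 (Q - r + Q*2) = -1 := by
      unfold chi12; rw [show (Q - r + Q*2) % 12 = 7 by omega]; norm_num
    have g3 : chi12 (Q - r + Q*3) = 0 := by
      unfold chi12; rw [show (Q - r + Q*3) % 12 = 3 by omega]; norm_num
    have g4 : chi12 (Q - r + Q*4) = 1 := by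
      unfold chi12; rw [show (Q - r + Q*4) % 12 = 11 by omega]; norm_num
    have g5 : chi12 (Q - r + Q*5) = -1 := by
      unfold chi12; rw [show (Q - r + Q*5) % 12 = 7 by omega]; norm_num
    have hc1 : (∑ j ∈ Finset.range 6, (chi12 (r + Q*j) : ℂ) * om^j) = (-2:ℂ) + (2:ℂ)*om := by
      simp only [Finset.sum_range_succ, Finset.sum_range_zero, e0, e1, e2, e3, e4, e5]
      push_cast
      linear_combination ((-1:ℂ) + (1:ℂ)*om)*om_cube + ((0:ℂ))*om_sum
    have hc2 : (∑ j ∈ Finset.range 6, (chi12 (Q - r + Q*j) : ℂ) * om^j) = (2:ℂ) + (4:ℂ)*om := by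
      simp only [Finset.sum_range_succ, Finset.sum_range_zero, g0, g1, g2, g3, g4, g5]
      push_cast
      linear_combination ((1:ℂ)*om + (-1:ℂ)*om^2)*om_cube + ((-2:ℂ))*om_sum
    have hne : ((-2:ℂ) + (2:ℂ)*om) ≠ 0 := by
      intro hz
      exact om_ne_one (by linear_combination ((1:ℂ)/2)*hz)
    have hratio : ((2:ℂ) + (4:ℂ)*om)*om = -(om^2) * ((-2:ℂ) + (2:ℂ)*om) := by
      linear_combination ((2:ℂ))*om_cube + ((2:ℂ))*om_sum
    rw [hc1, hc2] at h0
    exact case_core _ _ 2 _ _ hne hratio hEE (key_ne Q r hr2 hQ4 hQ0 2) h0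
  · have e0 : chi12 (r + Q*0) = -1 := by
      unfold chi12; rw [show (r + Q*0) % 12 = 7 by omega]; norm_num
    have e1 : chi12 (r + Q*1) = 0 := by
      unfold chi12; rw [show (r + Q*1) % 12 = 3 by omega]; norm_num
    have e2 : chi12 (r + Q*2) = 1 := by
      unfold chi12; rw [show (r + Q*2) % 12 = 11 by omega]; norm_num
    have e3 : chi12 (r + Q*3) = -1 := by
      unfold chi12; rw [show (r + Q*3) % 12 = 7 by omega]; norm_num
    have e4 : chi12 (r + Q*4) = 0 := by
      unfold chi12; rw [show (r + Q*4) % 12 = 3 by omega]; norm_num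
    have e5 : chi12 (r + Q*5) = 1 := by
      unfold chi12; rw [show (r + Q*5) % 12 = 11 by omega]; norm_num
    have g0 : chi12 (Q - r + Q*0) = 1 := by
      unfold chi12; rw [show (Q - r + Q*0) % 12 = 1 by omega]; norm_num
    have g1 : chi12 (Q - r + Q*1) = 0 := by
      unfold chi12; rw [show (Q - r + Q*1) % 12 = 9 by omega]; norm_num
    have g2 : chi12 (Q - r + Q*2) = -1 := by
      unfold chi12; rw [show (Q - r + Q*2) % 12 = 5 by omega]; norm_num
    have g3 : chi12 (Q - r + Q*3) = 1 := by
      unfold chi12; rw [show (Q - r + Q*3) % 12 = 1 by omega]; norm_num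
    have g4 : chi12 (Q - r + Q*4) = 0 := by
      unfold chi12; rw [show (Q - r + Q*4) % 12 = 9 by omega]; norm_num
    have g5 : chi12 (Q - r + Q*5) = -1 := by
      unfold chi12; rw [show (Q - r + Q*5) % 12 = 5 by omega]; norm_num
    have hc1 : (∑ j ∈ Finset.range 6, (chi12 (r + Q*j) : ℂ) * om^j) = (-4:ℂ) + (-2:ℂ)*om := by
      simp only [Finset.sum_range_succ, Finset.sum_range_zero, e0, e1, e2, e3, e4, e5]
      push_cast
      linear_combination ((-1:ℂ) + (1:ℂ)*om^2)*om_cube + ((2:ℂ))*om_sum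
    have hc2 : (∑ j ∈ Finset.range 6, (chi12 (Q - r + Q*j) : ℂ) * om^j) = (4:ℂ) + (2:ℂ)*om := by
      simp only [Finset.sum_range_succ, Finset.sum_range_zero, g0, g1, g2, g3, g4, g5]
      push_cast
      linear_combination ((1:ℂ) + (-1:ℂ)*om^2)*om_cube + ((-2:ℂ))*om_sum
    have hne : ((-4:ℂ) + (-2:ℂ)*om) ≠ 0 := by
      intro hz
      have hcb : (-72:ℂ) = 0 := by
        linear_combination ((16:ℂ) + (-8:ℂ)*om + (4:ℂ)*om^2)*hz + (8:ℂ)*om_cube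
      norm_num at hcb
    have hratio : ((4:ℂ) + (2:ℂ)*om)*om = -(om^1) * ((-4:ℂ) + (-2:ℂ)*om) := by
      linear_combination ((0:ℂ))*om_cube + ((0:ℂ))*om_sum
    rw [hc1, hc2] at h0
    exact case_core _ _ 1 _ _ hne hratio hEE (key_ne Q r hr2 hQ4 hQ0 1) h0
  · have e0 : chi12 (r + Q*0) = 0 := by
      unfold chi12; rw [show (r + Q*0) % 12 = 9 by omega]; norm_num
    have e1 : chi12 (r + Q*1) = -1 := by
      unfold chi12; rw [show (r + Q*1) % 12 = 5 by omega]; norm_num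
    have e2 : chi12 (r + Q*2) = 1 := by
      unfold chi12; rw [show (r + Q*2) % 12 = 1 by omega]; norm_num
    have e3 : chi12 (r + Q*3) = 0 := by
      unfold chi12; rw [show (r + Q*3) % 12 = 9 by omega]; norm_num
    have e4 : chi12 (r + Q*4) = -1 := by
      unfold chi12; rw [show (r + Q*4) % 12 = 5 by omega]; norm_num
    have e5 : chi12 (r + Q*5) = 1 := by
      unfold chi12; rw [show (r + Q*5) % 12 = 1 by omega]; norm_num
    have g0 : chi12 (Q - r + Q*0) = 1 := by
      unfold chi12; rw [show (Q - r + Q*0) % 12 = 11 by omega]; norm_num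
    have g1 : chi12 (Q - r + Q*1) = -1 := by
      unfold chi12; rw [show (Q - r + Q*1) % 12 = 7 by omega]; norm_num
    have g2 : chi12 (Q - r + Q*2) = 0 := by
      unfold chi12; rw [show (Q - r + Q*2) % 12 = 3 by omega]; norm_num
    have g3 : chi12 (Q - r + Q*3) = 1 := by
      unfold chi12; rw [show (Q - r + Q*3) % 12 = 11 by omega]; norm_num
    have g4 : chi12 (Q - r + Q*4) = -1 := by
      unfold chi12; rw [show (Q - r + Q*4) % 12 = 7 by omega]; norm_num
    have g5 : chi12 (Q - r + Q*5) = 0 := by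
      unfold chi12; rw [show (Q - r + Q*5) % 12 = 3 by omega]; norm_num
    have hc1 : (∑ j ∈ Finset.range 6, (chi12 (r + Q*j) : ℂ) * om^j) = (-2:ℂ) + (-4:ℂ)*om := by
      simp only [Finset.sum_range_succ, Finset.sum_range_zero, e0, e1, e2, e3, e4, e5]
      push_cast
      linear_combination ((-1:ℂ)*om + (1:ℂ)*om^2)*om_cube + ((2:ℂ))*om_sum
    have hc2 : (∑ j ∈ Finset.range 6, (chi12 (Q - r + Q*j) : ℂ) * om^j) = (2:ℂ) + (-2:ℂ)*om := by
      simp only [Finset.sum_range_succ, Finset.sum_range_zero, g0, g1, g2, g3, g4, g5]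
      push_cast
      linear_combination ((1:ℂ) + (-1:ℂ)*om)*om_cube + ((0:ℂ))*om_sum
    have hne : ((-2:ℂ) + (-4:ℂ)*om) ≠ 0 := by
      intro hz
      have hcb : (-72:ℂ) = 0 := by
        linear_combination ((4:ℂ) + (-8:ℂ)*om + (16:ℂ)*om^2)*hz + (64:ℂ)*om_cube
      norm_num at hcb
    have hratio : ((2:ℂ) + (-2:ℂ)*om)*om = -(om^0) * ((-2:ℂ) + (-4:ℂ)*om) := by
      linear_combination ((0:ℂ))*om_cube + ((-2:ℂ))*om_sum
    rw [hc1, hc2] at h0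
    exact case_core _ _ 0 _ _ hne hratio hEE (key_ne Q r hr2 hQ4 hQ0 0) h0
  · have e0 : chi12 (r + Q*0) = 1 := by
      unfold chi12; rw [show (r + Q*0) % 12 = 11 by omega]; norm_num
    have e1 : chi12 (r + Q*1) = -1 := by
      unfold chi12; rw [show (r + Q*1) % 12 = 7 by omega]; norm_num
    have e2 : chi12 (r + Q*2) = 0 := by
      unfold chi12; rw [show (r + Q*2) % 12 = 3 by omega]; norm_num
    have e3 : chi12 (r + Q*3) = 1 := by
      unfold chi12; rw [show (r + Q*3) % 12 = 11 by omega]; norm_num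
    have e4 : chi12 (r + Q*4) = -1 := by
      unfold chi12; rw [show (r + Q*4) % 12 = 7 by omega]; norm_num
    have e5 : chi12 (r + Q*5) = 0 := by
      unfold chi12; rw [show (r + Q*5) % 12 = 3 by omega]; norm_num
    have g0 : chi12 (Q - r + Q*0) = 0 := by
      unfold chi12; rw [show (Q - r + Q*0) % 12 = 9 by omega]; norm_num
    have g1 : chi12 (Q - r + Q*1) = -1 := by
      unfold chi12; rw [show (Q - r + Q*1) % 12 = 5 by omega]; norm_num
    have g2 : chi12 (Q - r + Q*2) = 1 := by
      unfold chi12; rw [show (Q - r + Q*2) % 12 = 1 by omega]; norm_num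
    have g3 : chi12 (Q - r + Q*3) = 0 := by
      unfold chi12; rw [show (Q - r + Q*3) % 12 = 9 by omega]; norm_num
    have g4 : chi12 (Q - r + Q*4) = -1 := by
      unfold chi12; rw [show (Q - r + Q*4) % 12 = 5 by omega]; norm_num
    have g5 : chi12 (Q - r + Q*5) = 1 := by
      unfold chi12; rw [show (Q - r + Q*5) % 12 = 1 by omega]; norm_num
    have hc1 : (∑ j ∈ Finset.range 6, (chi12 (r + Q*j) : ℂ) * om^j) = (2:ℂ) + (-2:ℂ)*om := by
      simp only [Finset.sum_range_succ, Finset.sum_range_zero, e0, e1, e2, e3, e4, e5]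
      push_cast
      linear_combination ((1:ℂ) + (-1:ℂ)*om)*om_cube + ((0:ℂ))*om_sum
    have hc2 : (∑ j ∈ Finset.range 6, (chi12 (Q - r + Q*j) : ℂ) * om^j) = (-2:ℂ) + (-4:ℂ)*om := by
      simp only [Finset.sum_range_succ, Finset.sum_range_zero, g0, g1, g2, g3, g4, g5]
      push_cast
      linear_combination ((-1:ℂ)*om + (1:ℂ)*om^2)*om_cube + ((2:ℂ))*om_sum
    have hne : ((2:ℂ) + (-2:ℂ)*om) ≠ 0 := by
      intro hz
      exact om_ne_one (by linear_combination ((1:ℂ)/(-2))*hz)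
    have hratio : ((-2:ℂ) + (-4:ℂ)*om)*om = -(om^2) * ((2:ℂ) + (-2:ℂ)*om) := by
      linear_combination ((-2:ℂ))*om_cube + ((-2:ℂ))*om_sum
    rw [hc1, hc2] at h0
    exact case_core _ _ 2 _ _ hne hratio hEE (key_ne Q r hr2 hQ4 hQ0 2) h0

theorem stmt5 (s n : ℕ) (hn : 1 ≤ n) : kloostermanS (2 ^ s) n ≠ 0 := by
  obtain ⟨b, hb2, hbm⟩ := sqrt_two_adic (-24*(n:ℤ)+1) (by omega) s
  have hQz : (0:ℤ) < ((2^(s+2):ℕ):ℤ) := by positivity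
  have hQcast : ((2^(s+2):ℕ):ℤ) = (2:ℤ)^(s+2) := by push_cast; ring
  set rz : ℤ := b % ((2^(s+2):ℕ):ℤ) with hrzdef
  have hrz0 : 0 ≤ rz := Int.emod_nonneg b (ne_of_gt hQz)
  have hrzlt : rz < ((2^(s+2):ℕ):ℤ) := Int.emod_lt_of_pos b hQz
  set r : ℕ := rz.toNat with hrdef
  have hrcast : (r:ℤ) = rz := Int.toNat_of_nonneg hrz0
  have hrQ : r < 2^(s+2) := by
    have h := hrcast ▸ hrzlt
    exact_mod_cast h
  have hrz2 : rz % 2 = b % 2 := by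
    rw [hrzdef]
    exact Int.emod_emod_of_dvd b (by rw [hQcast]; exact ⟨2^(s+1), by ring⟩)
  have hr2 : r % 2 = 1 := by omega
  have hdvd_rb : ((2:ℤ)^(s+2)) ∣ (r:ℤ) - b := by
    rw [hrcast, hrzdef]
    refine ⟨-(b / ((2^(s+2):ℕ):ℤ)), ?_⟩
    rw [Int.emod_def, hQcast]
    ring
  have hrm : ((2:ℤ)^(s+3)) ∣ (r:ℤ)^2 - (-24*(n:ℤ)+1) := by
    obtain ⟨u, hu⟩ := sq_lift s (r:ℤ) b (by omega) hb2 hdvd_rb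
    obtain ⟨v, hv⟩ := hbm
    exact ⟨u + v, by linear_combination hu + hv⟩
  unfold kloostermanS
  apply mul_ne_zero
  · apply mul_ne_zero (by norm_num)
    rw [Complex.ofReal_ne_zero]
    refine Real.sqrt_ne_zero'.mpr ?_
    positivity
  · rw [sum_eq s n r hr2 hrQ hrm _ ?hf0]
    case hf0 =>
      intro x hx
      rw [chi12_three x hx]
      push_cast
      ring
    have hden : ∀ x : ℕ, (2*(Real.pi:ℂ)*I*((x:ℂ)/(12*((2^s:ℕ):ℂ))))
        = (2*(Real.pi:ℂ)*I*((x:ℂ)/(3*((2^(s+2):ℕ):ℂ)))) := by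
      intro x
      push_cast
      ring_nf
    simp only [hden]
    refine final_ne (2^(s+2)) r (by positivity) ?_ (Qmod12 s) hr2 hrQ
    have h4 : 2^(s+2) = 4*2^s := by ring
    omega
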